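/- Fix N ≥ 1, complex numbers λ₁, …, λ_N with λ_j + λ_k ≠ 0 for all j, k, and complex vectors (p_j, q_j), j = 1, …, N. Suppose (p̃_k, q̃_k), k = 1, …, N, satisfy the linear system Σ_{k=1}^N [(p_j p_k + q_j q_k)/(λ_j + λ_k)]·p̃_k = q_j and Σ_{k=1}^N [(p_j p_k + q_j q_k)/(λ_j + λ_k)]·q̃_k = −p_j for every j = 1, …, N. Then Σ_{j=1}^N λ_j q̃_j q_j − Σ_{j=1}^N λ_j p̃_j p_j = (Σ_{j=1}^N p̃_j p_j)·(Σ_{k=1}^N p_k q̃_k) + (Σ_{j=1}^N q̃_j q_j)·(Σ_{k=1}^N p̃_k q_k). -/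
import Mathlib


/-- the algebraic identity
`Σ λⱼq̃ⱼqⱼ − Σ λⱼp̃ⱼpⱼ = (Σ p̃ⱼpⱼ)(Σ pₖq̃ₖ) + (Σ q̃ⱼqⱼ)(Σ p̃ₖqₖ)`
used in the proof of the N-fold Darboux transformation of the mKdV equation. -/
theorem stmt_9 (N : ℕ) (hN : 1 ≤ N) (lam : Fin N → ℂ)
    (hlam : ∀ j k, lam j + lam k ≠ 0)
    (p q pt qt : Fin N → ℂ)
    (hp : ∀ j, ∑ k, (p j * p k + q j * q k) / (lam j + lam k) * pt k = q j)
    (hq : ∀ j, ∑ k, (p j * p k + q j * q k) / (lam j + lam k) * qt k = -(p j)) :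
    (∑ j, lam j * qt j * q j) - ∑ j, lam j * pt j * p j
      = (∑ j, pt j * p j) * (∑ k, p k * qt k) + (∑ j, qt j * q j) * (∑ k, pt k * q k) := by
  set A : Fin N → Fin N → ℂ := fun j k => (p j * p k + q j * q k) / (lam j + lam k) with hA
  have hsymm : ∀ j k, A j k = A k j := by
    intro j k
    simp only [hA]
    rw [add_comm (lam j), mul_comm (p j), mul_comm (q j), add_comm (p k * p j)]
  have key : ∀ j k, A j k * (lam j + lam k) = p j * p k + q j * q k := fun j k =>
    div_mul_cancel₀ _ (hlam j k)
  have e1 : (∑ j, lam j * qt j * q j)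
      = ∑ j, ∑ k, lam j * qt j * (A j k * pt k) := by
    refine Finset.sum_congr rfl fun j _ => ?_
    rw [← hp j, Finset.mul_sum]
  have e2 : (∑ j, lam j * pt j * p j)
      = ∑ j, ∑ k, -(lam j * pt j * (A j k * qt k)) := by
    refine Finset.sum_congr rfl fun j _ => ?_
    have hpj : p j = -∑ k, A j k * qt k := by rw [hq j]; ring
    rw [hpj, mul_neg, Finset.mul_sum, ← Finset.sum_neg_distrib]
  have e2' : (∑ j, ∑ k, -(lam j * pt j * (A j k * qt k)))
      = ∑ j, ∑ k, -(lam k * qt j * (A j k * pt k)) := by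
    rw [Finset.sum_comm]
    refine Finset.sum_congr rfl fun j _ => Finset.sum_congr rfl fun k _ => ?_
    rw [hsymm k j]; ring
  rw [e1, e2, e2', ← Finset.sum_sub_distrib]
  calc ∑ j, ((∑ k, lam j * qt j * (A j k * pt k)) - ∑ k, -(lam k * qt j * (A j k * pt k)))
      = ∑ j, ∑ k, (p j * p k + q j * q k) * (qt j * pt k) := by
        refine Finset.sum_congr rfl fun j _ => ?_
        rw [← Finset.sum_sub_distrib]
        refine Finset.sum_congr rfl fun k _ => ?_
        linear_combination (qt j * pt k) * key j k
    _ = (∑ j, ∑ k, (p j * qt j) * (p k * pt k)) + ∑ j, ∑ k, (qt j * q j) * (pt k * q k) := by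
        rw [← Finset.sum_add_distrib]
        refine Finset.sum_congr rfl fun j _ => ?_
        rw [← Finset.sum_add_distrib]
        refine Finset.sum_congr rfl fun k _ => ?_
        ring
    _ = (∑ j, p j * qt j) * (∑ k, p k * pt k) + (∑ j, qt j * q j) * (∑ k, pt k * q k) := by
        rw [← Finset.sum_mul_sum, ← Finset.sum_mul_sum]
    _ = (∑ j, pt j * p j) * (∑ k, p k * qt k) + (∑ j, qt j * q j) * (∑ k, pt k * q k) := by
        rw [mul_comm (∑ j, p j * qt j),
          show (∑ k, p k * pt k) = ∑ j, pt j * p j from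
            Finset.sum_congr rfl fun k _ => mul_comm _ _]
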